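/- Let M be an additive commutative monoid, B an additive commutative group, and let γ : M → G be the group completion of M (the canonical map from M to its Grothendieck group, i.e. the localization of M at the top additive submonoid). Then every polynomial map f : M → B extends uniquely to a polynomial map F : G → B with F ∘ γ = f; that is, such an F exists, has the same degree bound as f, and any two polynomial maps G → B extending f are equal. -/

import Mathlib

/-- A map `f : M → B` has degree `≤ 0` if it is constant, and degree `≤ n + 1` if for every
`a : M` the map `x ↦ f (x + a) - f x - f a` has degree `≤ n`. -/
def PolyDegLE {M B : Type*} [AddCommMonoid M] [AddCommGroup B] : ℕ → (M → B) → Prop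
  | 0, f => ∃ b, ∀ x, f x = b
  | n + 1, f => ∀ a : M, PolyDegLE n fun x => f (x + a) - f x - f a

/-- A map is polynomial if it has degree `≤ n` for some natural number `n`. -/
def IsPolynomialMap {M B : Type*} [AddCommMonoid M] [AddCommGroup B] (f : M → B) : Prop :=
  ∃ n, PolyDegLE n f

section Aux

variable {M B : Type*} [AddCommMonoid M] [AddCommGroup B]

theorem polyDegLE_congr : ∀ (n : ℕ) {f g : M → B}, (∀ x, f x = g x) →
    PolyDegLE n f → PolyDegLE n g
  | 0, f, g, h, ⟨b, hb⟩ => ⟨b, fun x => (h x).symm.trans (hb x)⟩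
  | n + 1, f, g, h, hf => fun a =>
      polyDegLE_congr n (fun x => by rw [h, h, h]) (hf a)

theorem polyDegLE_const : ∀ (n : ℕ) (b : B), PolyDegLE n (fun _ : M => b)
  | 0, b => ⟨b, fun _ => rfl⟩
  | n + 1, b => fun _ => polyDegLE_const n (b - b - b)

theorem polyDegLE_neg : ∀ (n : ℕ) {f : M → B}, PolyDegLE n f →
    PolyDegLE n (fun x => -f x)
  | 0, f, ⟨b, hb⟩ => ⟨-b, fun x => by show -f x = -b; rw [hb]⟩
  | n + 1, f, hf => fun a =>
      polyDegLE_congr n (fun x => by dsimp only; abel) (polyDegLE_neg n (hf a))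

theorem polyDegLE_add : ∀ (n : ℕ) {f g : M → B}, PolyDegLE n f → PolyDegLE n g →
    PolyDegLE n (fun x => f x + g x)
  | 0, f, g, ⟨b, hb⟩, ⟨c, hc⟩ => ⟨b + c, fun x => by show f x + g x = b + c; rw [hb, hc]⟩
  | n + 1, f, g, hf, hg => fun a =>
      polyDegLE_congr n (fun x => by dsimp only; abel) (polyDegLE_add n (hf a) (hg a))

theorem polyDegLE_sub (n : ℕ) {f g : M → B} (hf : PolyDegLE n f) (hg : PolyDegLE n g) :
    PolyDegLE n (fun x => f x - g x) :=
  polyDegLE_congr n (fun x => (sub_eq_add_neg _ _).symm)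
    (polyDegLE_add n hf (polyDegLE_neg n hg))

theorem polyDegLE_translate : ∀ (n : ℕ) {f : M → B} (c : M), PolyDegLE n f →
    PolyDegLE n (fun x => f (x + c))
  | 0, f, c, ⟨b, hb⟩ => ⟨b, fun x => hb _⟩
  | n + 1, f, c, hf => fun a => by
      have h1 : PolyDegLE n (fun x : M => f (x + c + a) - f (x + c) - f a) :=
        polyDegLE_translate n c (hf a)
      have h2 := polyDegLE_add n h1 (polyDegLE_const n (f a - f (a + c)))
      exact polyDegLE_congr n
        (fun x => by rw [add_right_comm x c a]; abel) h2

theorem polyDegLE_succ : ∀ (n : ℕ) {f : M → B}, PolyDegLE n f → PolyDegLE (n + 1) f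
  | 0, f, ⟨b, hb⟩ => fun a => ⟨b - b - b, fun x => by show f (x + a) - f x - f a = b - b - b; rw [hb, hb, hb]⟩
  | n + 1, f, hf => fun a => polyDegLE_succ n (hf a)

theorem polyDegLE_mono {n m : ℕ} (h : n ≤ m) {f : M → B} (hf : PolyDegLE n f) :
    PolyDegLE m f := by
  induction h with
  | refl => exact hf
  | step _ ih => exact polyDegLE_succ _ ih

theorem polyDegLE_fiber : ∀ (n : ℕ) {f : M → B}, PolyDegLE n f →
    ∀ x y c : M, x + c = y + c → f x = f y
  | 0, f, ⟨b, hb⟩, x, y, c, _ => (hb x).trans (hb y).symm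
  | n + 1, f, hf, x, y, c, h => by
      have h1 : f (x + c) = f (y + c) := by rw [h]
      have h2 : f (x + c) - f x - f c = f (y + c) - f y - f c :=
        polyDegLE_fiber n (hf c) x y c h
      rw [h1] at h2
      have h3 : f (y + c) - f x = f (y + c) - f y := sub_left_inj.mp h2
      exact sub_right_inj.mp h3

theorem eq_of_sub_eq_sub' {X Y L R : B} (h : L = R) (h2 : X - Y = L - R) : X = Y := by
  rw [h, sub_self] at h2
  exact sub_eq_zero.mp h2

end Aux

section Grp

variable {M B : Type*} [AddCommMonoid M] [AddCommGroup B]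

/-- The canonical map to the group completion. -/
def gam (x : M) : AddLocalization (⊤ : AddSubmonoid M) := AddLocalization.mk x 0

theorem gam_add (x y : M) : gam x + gam y = gam (x + y) := by
  unfold gam
  rw [AddLocalization.mk_add, add_zero]

theorem gam_rep (g : AddLocalization (⊤ : AddSubmonoid M)) :
    ∃ a b : M, g + gam b = gam a := by
  induction g using AddLocalization.ind with
  | _ y =>
    refine ⟨y.1, y.2, ?_⟩
    unfold gam
    rw [AddLocalization.mk_add, add_zero]
    rw [AddLocalization.mk_eq_mk_iff, AddLocalization.r_iff_exists]
    exact ⟨0, by simp [add_comm]⟩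

theorem gam_ker {x y : M} (h : gam (M := M) x = gam y) : ∃ c, x + c = y + c := by
  obtain ⟨c, hc⟩ := AddLocalization.r_iff_exists.mp (AddLocalization.mk_eq_mk_iff.mp h)
  simp only [ZeroMemClass.coe_zero, zero_add] at hc
  exact ⟨c, by rw [add_comm x, add_comm y]; exact hc⟩

theorem poly_vanish : ∀ (n : ℕ) (P : AddLocalization (⊤ : AddSubmonoid M) → B),
    PolyDegLE n P → (∀ x, P (gam x) = 0) → ∀ g, P g = 0 := by
  intro n
  induction n with
  | zero =>
    rintro P ⟨b, hb⟩ h0 g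
    rw [hb g]
    exact (hb (gam 0)).symm.trans (h0 0)
  | succ n ih =>
    intro P hP h0 g
    obtain ⟨a, b, hab⟩ := gam_rep g
    have hz : ∀ x, P (gam x + gam b) - P (gam x) - P (gam b) = 0 := by
      intro x
      rw [gam_add, h0, h0, h0]
      abel
    have key := ih _ (hP (gam b)) hz g
    rw [hab, h0 a, h0 b] at key
    simpa using key

theorem poly_uniq (n : ℕ) (P Q : AddLocalization (⊤ : AddSubmonoid M) → B)
    (hP : PolyDegLE n P) (hQ : PolyDegLE n Q)
    (h : ∀ x, P (gam x) = Q (gam x)) : P = Q := by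
  funext g
  have := poly_vanish n (fun g => P g - Q g) (polyDegLE_sub n hP hQ)
    (fun x => sub_eq_zero.mpr (h x)) g
  exact sub_eq_zero.mp this

theorem poly_exists_ext : ∀ (n : ℕ) (f : M → B), PolyDegLE n f →
    ∃ F : AddLocalization (⊤ : AddSubmonoid M) → B,
      PolyDegLE n F ∧ ∀ x, F (gam x) = f x := by
  intro n
  induction n with
  | zero =>
    rintro f ⟨b, hb⟩
    exact ⟨fun _ => b, ⟨b, fun _ => rfl⟩, fun x => (hb x).symm⟩
  | succ n ih =>
    intro f hf
    choose D hD1 hD2 using fun b : M => ih _ (hf b)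
    -- the cocycle identity
    have star : ∀ b c : M, ∀ g, D b (g + gam c) + D c g
        = D (b + c) g + (f (b + c) - f b - f c) := by
      intro b c
      have hl : PolyDegLE n (fun g => D b (g + gam c) + D c g) :=
        polyDegLE_add n (polyDegLE_translate n _ (hD1 b)) (hD1 c)
      have hr : PolyDegLE n (fun g => D (b + c) g + (f (b + c) - f b - f c)) :=
        polyDegLE_add n (hD1 _) (polyDegLE_const n _)
      have agree : ∀ x, D b (gam x + gam c) + D c (gam x)
          = D (b + c) (gam x) + (f (b + c) - f b - f c) := by
        intro x
        rw [gam_add, hD2, hD2, hD2,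
          show x + c + b = x + (b + c) by rw [add_assoc, add_comm c b]]
        abel
      exact fun g => congrFun (poly_uniq n _ _ hl hr agree) g
    have swap : ∀ b c : M, ∀ g, D b (g + gam c) + D c g
        = D c (g + gam b) + D b g := by
      intro b c g
      rw [star b c g, star c b g, add_comm c b]
      abel
    have hker' : ∀ x y : M, gam (M := M) x = gam y → f x = f y := by
      intro x y h
      obtain ⟨c, hc⟩ := gam_ker h
      exact polyDegLE_fiber (n + 1) hf x y c hc
    -- well-definedness of the candidate extension
    have wd : ∀ (g : AddLocalization (⊤ : AddSubmonoid M)) (a b a' b' : M),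
        g + gam b = gam a → g + gam b' = gam a' →
        f a - f b - D b g = f a' - f b' - D b' g := by
      intro g a b a' b' hab hab'
      have hs := swap b b' g
      rw [hab', hab, hD2, hD2] at hs
      -- hs : f (a' + b) - f a' - f b + D b' g = f (a + b') - f a - f b' + D b g
      have habk : f (a + b') = f (a' + b) := by
        apply hker'
        rw [← gam_add, ← gam_add, ← hab, ← hab', add_right_comm]
      exact eq_of_sub_eq_sub' hs (by rw [habk]; abel)
    choose ra rb hrab using gam_rep (M := M)
    set F : AddLocalization (⊤ : AddSubmonoid M) → B :=
      fun g => f (ra g) - f (rb g) - D (rb g) g with hF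
    have Feval : ∀ (g : AddLocalization (⊤ : AddSubmonoid M)) (a b : M),
        g + gam b = gam a → F g = f a - f b - D b g :=
      fun g a b hab => wd g (ra g) (rb g) a b (hrab g) hab
    have hγF : ∀ x, F (gam x) = f x := by
      intro x
      rw [Feval (gam x) x 0 (by rw [gam_add, add_zero]), hD2, add_zero]
      abel
    have hDelta : ∀ (c : M) g, F (g + gam c) - F g - F (gam c) = D c g := by
      intro c g
      have h1 := hrab g
      have e1 : F (g + gam c) = f (ra g + c) - f (rb g) - D (rb g) (g + gam c) :=
        Feval _ _ _ (by rw [add_right_comm, h1, gam_add])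
      have e2 : F g = f (ra g) - f (rb g) - D (rb g) g := Feval _ _ _ h1
      have hs := swap (rb g) c g
      rw [h1, hD2] at hs
      -- hs : D (rb g) (g + gam c) + D c g
      --    = f (ra g + c) - f (ra g) - f c + D (rb g) g
      rw [e1, e2, hγF c]
      exact eq_of_sub_eq_sub' hs.symm (by abel)
    have hS : ∀ c : M, PolyDegLE n (fun g => F (g + gam c) - F g - F (gam c)) :=
      fun c => polyDegLE_congr n (fun g => (hDelta c g).symm) (hD1 c)
    have hadd : ∀ α β : AddLocalization (⊤ : AddSubmonoid M),
        PolyDegLE n (fun g => F (g + α) - F g - F α) →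
        PolyDegLE n (fun g => F (g + β) - F g - F β) →
        PolyDegLE n (fun g => F (g + (α + β)) - F g - F (α + β)) := by
      intro α β hα hβ
      have t1 : PolyDegLE n (fun g => F (g + β + α) - F (g + β) - F α) :=
        polyDegLE_translate n β hα
      have t2 := polyDegLE_add n (polyDegLE_add n t1 hβ)
        (polyDegLE_const n (F α + F β - F (α + β)))
      exact polyDegLE_congr n (fun g => by
        rw [show g + β + α = g + (α + β) by rw [add_assoc, add_comm β α]]
        abel) t2
    have hneg : ∀ α α' : AddLocalization (⊤ : AddSubmonoid M), α + α' = 0 →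
        PolyDegLE n (fun g => F (g + α) - F g - F α) →
        PolyDegLE n (fun g => F (g + α') - F g - F α') := by
      intro α α' hαα' hα
      have t1 : PolyDegLE n (fun g => F (g + α' + α) - F (g + α') - F α) :=
        polyDegLE_translate n α' hα
      have t2 := polyDegLE_add n (polyDegLE_neg n t1)
        (polyDegLE_const n (-F α - F α'))
      exact polyDegLE_congr n (fun g => by
        rw [show g + α' + α = g by rw [add_assoc, add_comm α' α, hαα', add_zero]]
        abel) t2
    have hdeg : PolyDegLE (n + 1) F := by
      intro α
      obtain ⟨c, d, hcd⟩ := gam_rep α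
      have hnegd : gam (M := M) d + AddLocalization.mk 0 ⟨d, AddSubmonoid.mem_top d⟩ = 0 := by
        unfold gam
        rw [AddLocalization.mk_add, add_zero, zero_add]
        exact AddLocalization.mk_self ⟨d, AddSubmonoid.mem_top d⟩
      have hα : gam c + AddLocalization.mk 0 (⟨d, AddSubmonoid.mem_top d⟩ : (⊤ : AddSubmonoid M)) = α := by
        rw [← hcd, add_assoc, hnegd, add_zero]
      have h1 := hneg (gam d) _ hnegd (hS d)
      have h2 := hadd (gam c) _ (hS c) h1
      exact polyDegLE_congr n (fun g => by rw [hα]) h2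
    exact ⟨F, hdeg, hγF⟩

end Grp

/-- Every polynomial map `f : M → B` from an additive commutative monoid `M` to an additive
commutative group `B` extends uniquely to a polynomial map on the group completion
`G = AddLocalization (⊤ : AddSubmonoid M)` of `M`, with the same degree bound; uniqueness holds
among all polynomial maps `G → B` extending `f` along the canonical map `γ`. -/
theorem stmt0 {M B : Type*} [AddCommMonoid M] [AddCommGroup B]
    (γ : M → AddLocalization (⊤ : AddSubmonoid M))
    (hγ : γ = fun x => AddLocalization.mk x 0)
    (f : M → B) (n : ℕ) (hf : PolyDegLE n f) :
    (∃ F : AddLocalization (⊤ : AddSubmonoid M) → B, PolyDegLE n F ∧ F ∘ γ = f) ∧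
      ∀ F₁ F₂ : AddLocalization (⊤ : AddSubmonoid M) → B,
        IsPolynomialMap F₁ → IsPolynomialMap F₂ → F₁ ∘ γ = f → F₂ ∘ γ = f → F₁ = F₂ := by
  subst hγ
  constructor
  · obtain ⟨F, h1, h2⟩ := poly_exists_ext n f hf
    exact ⟨F, h1, funext fun x => h2 x⟩
  · rintro F₁ F₂ ⟨n₁, h₁⟩ ⟨n₂, h₂⟩ e₁ e₂
    refine poly_uniq (max n₁ n₂) F₁ F₂ (polyDegLE_mono (le_max_left _ _) h₁)
      (polyDegLE_mono (le_max_right _ _) h₂) (fun x => ?_)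
    exact (congrFun e₁ x).trans (congrFun e₂ x).symm
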